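/- Let B ∈ M_n(ℝ) be a sign skew-symmetric matrix (sign(b_ij) = -sign(b_ji) for all i,j). Then B is skew-symmetrizable if and only if for every r ≥ 1 and every cyclic sequence of indices k_0, k_1, ..., k_r with k_0 = k_r, one has |∏_{j=1}^r b_{k_{j-1} k_j}| = |∏_{j=1}^r b_{k_j k_{j-1}}|. -/

import Mathlib

open Matrix

noncomputable section

/-- Entrywise positive part `[A]₊`. -/
def matPos {n : ℕ} (A : Matrix (Fin n) (Fin n) ℝ) : Matrix (Fin n) (Fin n) ℝ :=
  fun i j => max (A i j) 0

/-- `J_k`: the identity matrix with the `(k,k)` entry replaced by `-1`. -/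
def Jmat {n : ℕ} (k : Fin n) : Matrix (Fin n) (Fin n) ℝ :=
  Matrix.diagonal (fun i => if i = k then -1 else 1)

/-- `A^{k•} = E_kk A`: keep only the `k`-th row of `A`. -/
def rowOnly {n : ℕ} (k : Fin n) (A : Matrix (Fin n) (Fin n) ℝ) : Matrix (Fin n) (Fin n) ℝ :=
  fun i j => if i = k then A i j else 0

/-- `A^{•k} = A E_kk`: keep only the `k`-th column of `A`. -/
def colOnly {n : ℕ} (k : Fin n) (A : Matrix (Fin n) (Fin n) ℝ) : Matrix (Fin n) (Fin n) ℝ :=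
  fun i j => if j = k then A i j else 0

/-- Matrix mutation `μ_k(B) = (J_k + [-B]₊^{•k}) B (J_k + [B]₊^{k•})`. -/
def mutB {n : ℕ} (B : Matrix (Fin n) (Fin n) ℝ) (k : Fin n) : Matrix (Fin n) (Fin n) ℝ :=
  (Jmat k + colOnly k (matPos (-B))) * B * (Jmat k + rowOnly k (matPos B))

/-- `B` is skew-symmetrizable: there is a positive diagonal `D` with `DB` skew-symmetric. -/
def SkewSymmetrizable {n : ℕ} (B : Matrix (Fin n) (Fin n) ℝ) : Prop :=
  ∃ d : Fin n → ℝ, (∀ i, 0 < d i) ∧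
    (Matrix.diagonal d * B)ᵀ = -(Matrix.diagonal d * B)

/-- One mutation step of the triple `(B_t, C_t, G_t)` in direction `k`,
with initial exchange matrix `B0`. -/
def stepBCG {n : ℕ} (B0 : Matrix (Fin n) (Fin n) ℝ)
    (X : Matrix (Fin n) (Fin n) ℝ × Matrix (Fin n) (Fin n) ℝ × Matrix (Fin n) (Fin n) ℝ)
    (k : Fin n) :
    Matrix (Fin n) (Fin n) ℝ × Matrix (Fin n) (Fin n) ℝ × Matrix (Fin n) (Fin n) ℝ :=
  ⟨mutB X.1 k,
   X.2.1 * Jmat k + X.2.1 * rowOnly k (matPos X.1) + colOnly k (matPos (-X.2.1)) * X.1,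
   X.2.2 * Jmat k + X.2.2 * colOnly k (matPos (-X.1)) - B0 * colOnly k (matPos (-X.2.1))⟩

/-- The triple `(B_t, C_t, G_t)` at the vertex of the `n`-regular tree reached from the
initial vertex by the path `w` (a list of mutation directions). -/
def BCG {n : ℕ} (B0 : Matrix (Fin n) (Fin n) ℝ) (w : List (Fin n)) :
    Matrix (Fin n) (Fin n) ℝ × Matrix (Fin n) (Fin n) ℝ × Matrix (Fin n) (Fin n) ℝ :=
  w.foldl (stepBCG B0) (B0, 1, 1)

/-- The `B`-pattern. -/
def Bpat {n : ℕ} (B0 : Matrix (Fin n) (Fin n) ℝ) (w : List (Fin n)) :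
    Matrix (Fin n) (Fin n) ℝ := (BCG B0 w).1

/-- The `C`-pattern. -/
def Cpat {n : ℕ} (B0 : Matrix (Fin n) (Fin n) ℝ) (w : List (Fin n)) :
    Matrix (Fin n) (Fin n) ℝ := (BCG B0 w).2.1

/-- The `G`-pattern. -/
def Gpat {n : ℕ} (B0 : Matrix (Fin n) (Fin n) ℝ) (w : List (Fin n)) :
    Matrix (Fin n) (Fin n) ℝ := (BCG B0 w).2.2

/-- Column sign-coherence of a matrix. -/
def ColSignCoherent {n : ℕ} (C : Matrix (Fin n) (Fin n) ℝ) : Prop :=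
  ∀ j, (∀ i, 0 ≤ C i j) ∨ (∀ i, C i j ≤ 0)

/-- Row sign-coherence of a matrix. -/
def RowSignCoherent {n : ℕ} (G : Matrix (Fin n) (Fin n) ℝ) : Prop :=
  ∀ i, (∀ j, 0 ≤ G i j) ∨ (∀ j, G i j ≤ 0)

namespace Stmt5Aux

variable {n : ℕ}

def G (B : Matrix (Fin n) (Fin n) ℝ) : SimpleGraph (Fin n) where
  Adj i j := i ≠ j ∧ B i j ≠ 0 ∧ B j i ≠ 0
  symm := ⟨fun i j h => ⟨h.1.symm, h.2.2, h.2.1⟩⟩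
  loopless := ⟨fun i h => h.1 rfl⟩

def q (B : Matrix (Fin n) (Fin n) ℝ) (i j : Fin n) : ℝ := |B i j| / |B j i|

lemma q_pos {B : Matrix (Fin n) (Fin n) ℝ} {i j : Fin n} (h : (G B).Adj i j) :
    0 < q B i j :=
  div_pos (abs_pos.mpr h.2.1) (abs_pos.mpr h.2.2)

def wt (B : Matrix (Fin n) (Fin n) ℝ) : {i j : Fin n} → (G B).Walk i j → ℝ
  | _, _, SimpleGraph.Walk.nil => 1
  | i, _, SimpleGraph.Walk.cons (v := v) _h p => q B i v * wt B p

@[simp] lemma wt_nil {B : Matrix (Fin n) (Fin n) ℝ} {i : Fin n} :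
    wt B (SimpleGraph.Walk.nil : (G B).Walk i i) = 1 := rfl

@[simp] lemma wt_cons {B : Matrix (Fin n) (Fin n) ℝ} {i j l : Fin n}
    (h : (G B).Adj i j) (p : (G B).Walk j l) :
    wt B (SimpleGraph.Walk.cons h p) = q B i j * wt B p := rfl

lemma wt_pos {B : Matrix (Fin n) (Fin n) ℝ} :
    ∀ {i j : Fin n} (p : (G B).Walk i j), 0 < wt B p
  | _, _, SimpleGraph.Walk.nil => one_pos
  | _, _, SimpleGraph.Walk.cons h p => mul_pos (q_pos h) (wt_pos p)

lemma wt_append {B : Matrix (Fin n) (Fin n) ℝ} :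
    ∀ {i j l : Fin n} (p : (G B).Walk i j) (p' : (G B).Walk j l),
      wt B (p.append p') = wt B p * wt B p'
  | _, _, _, SimpleGraph.Walk.nil, p' => by simp
  | _, _, _, SimpleGraph.Walk.cons h p, p' => by
    simp [wt_append p p', mul_assoc]

lemma q_symm (B : Matrix (Fin n) (Fin n) ℝ) (i j : Fin n) : q B j i = (q B i j)⁻¹ := by
  simp [q, inv_div]

lemma wt_reverse {B : Matrix (Fin n) (Fin n) ℝ} :
    ∀ {i j : Fin n} (p : (G B).Walk i j), wt B p.reverse = (wt B p)⁻¹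
  | _, _, SimpleGraph.Walk.nil => by simp
  | _, _, SimpleGraph.Walk.cons h p => by
    rw [SimpleGraph.Walk.reverse_cons, wt_append, wt_reverse p, wt_cons, wt_nil, q_symm]
    rw [wt_cons h p, mul_inv]
    ring

lemma wt_eq_prod {B : Matrix (Fin n) (Fin n) ℝ} :
    ∀ {i j : Fin n} (p : (G B).Walk i j),
      wt B p = ∏ m ∈ Finset.range p.length, q B (p.getVert m) (p.getVert (m + 1))
  | _, _, SimpleGraph.Walk.nil => by simp
  | _, _, SimpleGraph.Walk.cons h p => by
    rw [wt_cons, wt_eq_prod p, SimpleGraph.Walk.length_cons, Finset.prod_range_succ']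
    simp only [SimpleGraph.Walk.getVert_cons_succ, SimpleGraph.Walk.getVert_zero]
    ring

def Hyp (B : Matrix (Fin n) (Fin n) ℝ) : Prop :=
  ∀ (r : ℕ), 1 ≤ r → ∀ k : ℕ → Fin n, k 0 = k r →
    |∏ j ∈ Finset.range r, B (k j) (k (j + 1))| =
    |∏ j ∈ Finset.range r, B (k (j + 1)) (k j)|

lemma wt_closed {B : Matrix (Fin n) (Fin n) ℝ} (hcyc : Hyp B) {i : Fin n}
    (p : (G B).Walk i i) : wt B p = 1 := by
  rw [wt_eq_prod]
  rcases Nat.eq_zero_or_pos p.length with h0 | hpos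
  · simp [h0]
  · have hk : p.getVert 0 = p.getVert p.length := by
      rw [p.getVert_zero, p.getVert_length]
    have hc := hcyc p.length hpos p.getVert hk
    have hadj : ∀ m ∈ Finset.range p.length,
        (G B).Adj (p.getVert m) (p.getVert (m + 1)) :=
      fun m hm => p.adj_getVert_succ (Finset.mem_range.mp hm)
    rw [Finset.abs_prod, Finset.abs_prod] at hc
    have hne : (∏ m ∈ Finset.range p.length, |B (p.getVert (m + 1)) (p.getVert m)|) ≠ 0 :=
      Finset.prod_ne_zero_iff.mpr fun m hm => abs_ne_zero.mpr (hadj m hm).2.2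
    calc (∏ m ∈ Finset.range p.length, q B (p.getVert m) (p.getVert (m + 1)))
        = (∏ m ∈ Finset.range p.length, |B (p.getVert m) (p.getVert (m + 1))|) /
          (∏ m ∈ Finset.range p.length, |B (p.getVert (m + 1)) (p.getVert m)|) := by
          rw [← Finset.prod_div_distrib]; rfl
      _ = 1 := by rw [hc, div_self hne]

lemma wt_indep {B : Matrix (Fin n) (Fin n) ℝ} (hcyc : Hyp B) {i j : Fin n}
    (p p' : (G B).Walk i j) : wt B p = wt B p' := by
  have h := wt_closed hcyc (p.append p'.reverse)
  rw [wt_append, wt_reverse] at h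
  have hp' : 0 < wt B p' := wt_pos _
  rw [← div_eq_mul_inv, div_eq_one_iff_eq hp'.ne'] at h
  exact h

def rep (B : Matrix (Fin n) (Fin n) ℝ) (i : Fin n) : Fin n :=
  ((G B).connectedComponentMk i).out

lemma reachable_rep (B : Matrix (Fin n) (Fin n) ℝ) (i : Fin n) :
    (G B).Reachable (rep B i) i :=
  SimpleGraph.ConnectedComponent.eq.mp ((G B).connectedComponentMk i).out_eq

def someWalk (B : Matrix (Fin n) (Fin n) ℝ) (i : Fin n) : (G B).Walk (rep B i) i :=
  Classical.choice (reachable_rep B i)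

def dfun (B : Matrix (Fin n) (Fin n) ℝ) (i : Fin n) : ℝ := wt B (someWalk B i)

lemma dfun_pos (B : Matrix (Fin n) (Fin n) ℝ) (i : Fin n) : 0 < dfun B i := wt_pos _

lemma dfun_adj {B : Matrix (Fin n) (Fin n) ℝ} (hcyc : Hyp B) {i j : Fin n}
    (h : (G B).Adj i j) : dfun B j = dfun B i * q B i j := by
  have hrep : rep B i = rep B j := by
    unfold rep
    rw [SimpleGraph.ConnectedComponent.sound h.reachable]
  have key : ∀ {a b : Fin n} (_ : a = b) (p : (G B).Walk a j) (p' : (G B).Walk b j),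
      wt B p = wt B p' := by
    rintro a b rfl p p'
    exact wt_indep hcyc p p'
  have h2 := key hrep ((someWalk B i).append (SimpleGraph.Walk.cons h .nil)) (someWalk B j)
  rw [wt_append, wt_cons, wt_nil, mul_one] at h2
  exact h2.symm

lemma dfun_key {B : Matrix (Fin n) (Fin n) ℝ} (hcyc : Hyp B) {i j : Fin n}
    (h : (G B).Adj i j) : dfun B j * |B j i| = dfun B i * |B i j| := by
  rw [dfun_adj hcyc h, q, div_eq_mul_inv, mul_assoc, mul_assoc,
    inv_mul_cancel₀ (abs_ne_zero.mpr h.2.2), mul_one]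

lemma sign_mul_abs (x : ℝ) : Real.sign x * |x| = x := by
  rcases lt_trichotomy x 0 with h | h | h
  · rw [Real.sign_of_neg h, abs_of_neg h]; ring
  · simp [h]
  · rw [Real.sign_of_pos h, abs_of_pos h]; ring

end Stmt5Aux

/-- a sign skew-symmetric real matrix is skew-symmetrizable iff, for every
cyclic sequence of indices `k_0, …, k_r` with `k_0 = k_r` (`r ≥ 1`), the absolute values
of the two cyclic products of entries agree. -/


theorem stmt5 {n : ℕ} (B : Matrix (Fin n) (Fin n) ℝ)
    (hsign : ∀ i j, Real.sign (B i j) = -Real.sign (B j i)) :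
    SkewSymmetrizable B ↔
      ∀ (r : ℕ), 1 ≤ r → ∀ k : ℕ → Fin n, k 0 = k r →
        |∏ j ∈ Finset.range r, B (k j) (k (j + 1))| =
        |∏ j ∈ Finset.range r, B (k (j + 1)) (k j)| := by
  constructor
  · rintro ⟨d, hd, hskew⟩ r hr k hk
    have key : ∀ a b, d a * |B a b| = d b * |B b a| := by
      intro a b
      have h := congrFun (congrFun hskew b) a
      simp only [Matrix.transpose_apply, Matrix.neg_apply, Matrix.diagonal_mul] at h
      have := congrArg abs h
      rw [abs_mul, abs_neg, abs_mul, abs_of_pos (hd a), abs_of_pos (hd b)] at this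
      exact this
    have hmul : (∏ j ∈ Finset.range r, (d (k j) * |B (k j) (k (j + 1))|))
        = ∏ j ∈ Finset.range r, (d (k (j + 1)) * |B (k (j + 1)) (k j)|) :=
      Finset.prod_congr rfl fun j _ => key (k j) (k (j + 1))
    rw [Finset.prod_mul_distrib, Finset.prod_mul_distrib] at hmul
    have hshift : (∏ j ∈ Finset.range r, d (k (j + 1))) = ∏ j ∈ Finset.range r, d (k j) := by
      have h1 := Finset.prod_range_succ' (fun j => d (k j)) r
      have h2 := Finset.prod_range_succ (fun j => d (k j)) r
      rw [h2] at h1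
      rw [← hk] at h1
      exact (mul_right_cancel₀ (hd (k 0)).ne' h1).symm
    rw [hshift] at hmul
    have hdpos : (0:ℝ) < ∏ j ∈ Finset.range r, d (k j) :=
      Finset.prod_pos fun j _ => hd _
    rw [Finset.abs_prod, Finset.abs_prod]
    exact mul_left_cancel₀ hdpos.ne' hmul
  · intro hcyc
    have hc : Stmt5Aux.Hyp B := hcyc
    refine ⟨Stmt5Aux.dfun B, Stmt5Aux.dfun_pos B, ?_⟩
    ext i j
    simp only [Matrix.transpose_apply, Matrix.neg_apply, Matrix.diagonal_mul]
    by_cases hB : B i j = 0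
    · have hji : B j i = 0 := by
        have hs := hsign i j
        rw [hB, Real.sign_zero] at hs
        have : Real.sign (B j i) = 0 := by linarith
        exact Real.sign_eq_zero_iff.mp this
      simp [hB, hji]
    · have hji : B j i ≠ 0 := by
        intro h0
        apply hB
        have hs := hsign i j
        rw [h0, Real.sign_zero, neg_zero] at hs
        exact Real.sign_eq_zero_iff.mp hs
      have hij' : i ≠ j := by
        rintro rfl
        have hs := hsign i i
        have h0 : Real.sign (B i i) = 0 := by linarith
        exact hB (Real.sign_eq_zero_iff.mp h0)
      have hadj : (Stmt5Aux.G B).Adj i j := ⟨hij', hB, hji⟩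
      have hkey := Stmt5Aux.dfun_key hc hadj
      have e1 : B j i = Real.sign (B j i) * |B j i| := (Stmt5Aux.sign_mul_abs _).symm
      have e2 : B i j = Real.sign (B i j) * |B i j| := (Stmt5Aux.sign_mul_abs _).symm
      rw [e1, e2, hsign j i]
      calc Stmt5Aux.dfun B j * (-Real.sign (B i j) * |B j i|)
          = -Real.sign (B i j) * (Stmt5Aux.dfun B j * |B j i|) := by ring
        _ = -Real.sign (B i j) * (Stmt5Aux.dfun B i * |B i j|) := by rw [hkey]
        _ = -(Stmt5Aux.dfun B i * (Real.sign (B i j) * |B i j|)) := by ring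


end
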